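/- Let M ≥ 2 be an integer, 0 < d ≤ λ/2, x ∈ (−1, 1), and define f(v, x) = −(1/√M) ∑_{m=1}^{M} sin((2πd/λ)(m−1)(v−x)). Then the set of stable points { v ∈ (−1, 1] : f(v, x) = 0 and ∂f/∂v (v, x) < 0 } equals { v ∈ (−1, 1] : v = x + kλ/((M−1)d) for some integer k }. -/

import Mathlib

open Real Finset

lemma sin_half_mul_sum (M : ℕ) (θ : ℝ) :
    Real.sin (θ / 2) * ∑ m ∈ Finset.range M, Real.sin (m * θ) =
      Real.sin ((M : ℝ) * θ / 2) * Real.sin (((M : ℝ) - 1) * θ / 2) := by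
  induction M with
  | zero => simp
  | succ n ih =>
    rw [Finset.sum_range_succ, mul_add, ih]
    push_cast
    have e1 : ((n:ℝ)+1) * θ / 2 = (n:ℝ)*θ/2 + θ/2 := by ring
    have e2 : ((n:ℝ)+1-1) * θ / 2 = (n:ℝ)*θ/2 := by ring
    have e3 : (n:ℝ) * θ = 2 * ((n:ℝ)*θ/2) := by ring
    have e4 : ((n:ℝ)-1) * θ / 2 = (n:ℝ)*θ/2 - θ/2 := by ring
    rw [e1, e2, e4, e3, Real.sin_add, Real.sin_sub, Real.sin_two_mul]
    ring

lemma weighted_geom (M : ℕ) (z : ℂ) :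
    (z - 1)^2 * ∑ m ∈ Finset.range M, (m:ℂ) * z^m
      = ((M:ℂ) - 1) * z^(M+1) - (M:ℂ) * z^M + z := by
  induction M with
  | zero => simp
  | succ n ih =>
    rw [Finset.sum_range_succ, mul_add, ih]
    push_cast
    ring

lemma sum_m_cos_eq_re (M : ℕ) (θ : ℝ) :
    ∑ m ∈ Finset.range M, (m:ℝ) * Real.cos (m * θ)
      = (∑ m ∈ Finset.range M, (m:ℂ) * Complex.exp (θ * Complex.I) ^ m).re := by
  rw [Complex.re_sum]
  apply Finset.sum_congr rfl
  intro m _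
  have h1 : Complex.exp ((θ:ℂ) * Complex.I) ^ m = Complex.exp (((m:ℝ)*θ : ℝ) * Complex.I) := by
    rw [← Complex.exp_nat_mul]
    push_cast
    ring_nf
  have h2 : ((m:ℕ):ℂ) = (((m:ℕ):ℝ):ℂ) := by push_cast; ring
  rw [h1, h2, Complex.re_ofReal_mul, Complex.exp_ofReal_mul_I_re]


lemma re_ne_one (z : ℂ) (hn : Complex.normSq z = 1) (h1 : z ≠ 1) : z.re ≠ 1 := by
  intro h
  apply h1
  have him : z.im = 0 := by
    rw [Complex.normSq_apply, h] at hn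
    nlinarith [sq_nonneg z.im]
  exact Complex.ext (by simp [h]) (by simp [him])

lemma normSq_sub_one (z : ℂ) (hn : Complex.normSq z = 1) :
    Complex.normSq (z - 1) = 2 - 2 * z.re := by
  rw [Complex.normSq_apply] at hn ⊢
  simp only [Complex.sub_re, Complex.sub_im, Complex.one_re, Complex.one_im, sub_zero]
  nlinarith

lemma re_div_self_sub_one (z : ℂ) (hn : Complex.normSq z = 1) (h1 : z ≠ 1) :
    (z / (z - 1)).re = 1 / 2 := by
  have hre := re_ne_one z hn h1
  have h2 : (2:ℝ) - 2 * z.re ≠ 0 := fun h => hre (by linarith)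
  rw [Complex.div_re, normSq_sub_one z hn]
  simp only [Complex.sub_re, Complex.sub_im, Complex.one_re, Complex.one_im, sub_zero]
  rw [← add_div, div_eq_iff h2]
  rw [Complex.normSq_apply] at hn
  nlinarith

lemma re_one_div_sub_one (z : ℂ) (hn : Complex.normSq z = 1) (h1 : z ≠ 1) :
    ((1:ℂ) / (z - 1)).re = -(1 / 2) := by
  have hre := re_ne_one z hn h1
  have h2 : (2:ℝ) - 2 * z.re ≠ 0 := fun h => hre (by linarith)
  rw [Complex.div_re, normSq_sub_one z hn]
  simp only [Complex.sub_re, Complex.sub_im, Complex.one_re, Complex.one_im, sub_zero,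
    one_mul, zero_mul, zero_div, add_zero]
  rw [div_eq_iff h2]
  ring

lemma sum_sin_eq_zero_iff (M : ℕ) (θ : ℝ) :
    (∑ m ∈ Finset.range M, Real.sin (m * θ)) = 0 ↔
      Real.sin ((M:ℝ) * θ / 2) = 0 ∨ Real.sin (((M:ℝ) - 1) * θ / 2) = 0 := by
  constructor
  · intro h
    by_cases h2 : Real.sin (θ / 2) = 0
    · left
      rcases Real.sin_eq_zero_iff.mp h2 with ⟨n, hn⟩
      have hθ : θ = 2 * (n:ℝ) * π := by linarith
      have : (M:ℝ) * θ / 2 = ((M * n : ℤ):ℝ) * π := by push_cast; rw [hθ]; ring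
      rw [this]
      exact Real.sin_int_mul_pi _
    · have key := sin_half_mul_sum M θ
      rw [h, mul_zero] at key
      exact mul_eq_zero.mp key.symm
  · intro h
    by_cases h2 : Real.sin (θ / 2) = 0
    · rcases Real.sin_eq_zero_iff.mp h2 with ⟨n, hn⟩
      have hθ : θ = 2 * (n:ℝ) * π := by linarith
      apply Finset.sum_eq_zero
      intro m _
      have : (m:ℝ) * θ = ((2 * m * n : ℤ):ℝ) * π := by push_cast; rw [hθ]; ring
      rw [this]
      exact Real.sin_int_mul_pi _
    · have key := sin_half_mul_sum M θ
      have hz : Real.sin ((M:ℝ) * θ / 2) * Real.sin (((M:ℝ) - 1) * θ / 2) = 0 := by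
        rcases h with h | h <;> rw [h] <;> ring
      rw [hz] at key
      rcases mul_eq_zero.mp key with h' | h'
      · exact absurd h' h2
      · exact h'


lemma sum_range_cast_id (M : ℕ) :
    ∑ m ∈ Finset.range M, (m:ℝ) = (M:ℝ) * ((M:ℝ) - 1) / 2 := by
  induction M with
  | zero => simp
  | succ n ih => rw [Finset.sum_range_succ, ih]; push_cast; ring

lemma sum_m_cos_center (M : ℕ) (n : ℤ) :
    ∑ m ∈ Finset.range M, (m:ℝ) * Real.cos ((m:ℝ) * (2 * (n:ℝ) * π))
      = (M:ℝ) * ((M:ℝ) - 1) / 2 := by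
  rw [← sum_range_cast_id M]
  apply Finset.sum_congr rfl
  intro m _
  have : (m:ℝ) * (2 * (n:ℝ) * π) = ((m * n : ℤ):ℝ) * (2 * π) := by push_cast; ring
  rw [this, Real.cos_int_mul_two_pi, mul_one]

lemma normSq_exp_I (θ : ℝ) : Complex.normSq (Complex.exp (θ * Complex.I)) = 1 := by
  rw [← Complex.sq_norm, Complex.norm_exp_ofReal_mul_I]; norm_num

lemma sum_m_cos_sidelobe (M : ℕ) (hM : 2 ≤ M) (θ : ℝ)
    (hz : Complex.exp (θ * Complex.I) ^ (M - 1) = 1)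
    (h1 : Complex.exp (θ * Complex.I) ≠ 1) :
    ∑ m ∈ Finset.range M, (m:ℝ) * Real.cos (m * θ) = ((M:ℝ) - 1) / 2 := by
  set z := Complex.exp (θ * Complex.I) with hzdef
  have hz1 : z - 1 ≠ 0 := sub_ne_zero.mpr h1
  have hM1 : M - 1 + 1 = M := by omega
  have e1 : z ^ M = z := by rw [← hM1, pow_succ, hz, one_mul]
  have e2 : z ^ (M + 1) = z ^ 2 := by
    rw [← hM1]
    rw [show M - 1 + 1 + 1 = M - 1 + 2 from rfl, pow_add, hz, one_mul]
  have key := weighted_geom M z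
  rw [e1, e2] at key
  have h3 : (z - 1) * ((∑ m ∈ Finset.range M, (m:ℂ) * z^m) * (z - 1))
      = (z - 1) * (((M:ℂ) - 1) * z) := by linear_combination key
  have h4 := mul_left_cancel₀ hz1 h3
  have h5 : (∑ m ∈ Finset.range M, (m:ℂ) * z^m) = Complex.ofReal ((M:ℝ) - 1) * (z / (z - 1)) := by
    rw [← mul_div_assoc, eq_div_iff hz1]
    push_cast
    linear_combination h4
  rw [sum_m_cos_eq_re, ← hzdef, h5, Complex.re_ofReal_mul,
    re_div_self_sub_one z (normSq_exp_I θ) h1]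
  ring

lemma sum_m_cos_unstable (M : ℕ) (θ : ℝ)
    (hz : Complex.exp (θ * Complex.I) ^ M = 1)
    (h1 : Complex.exp (θ * Complex.I) ≠ 1) :
    ∑ m ∈ Finset.range M, (m:ℝ) * Real.cos (m * θ) = -((M:ℝ) / 2) := by
  set z := Complex.exp (θ * Complex.I) with hzdef
  have hz1 : z - 1 ≠ 0 := sub_ne_zero.mpr h1
  have e2 : z ^ (M + 1) = z := by rw [pow_succ, hz, one_mul]
  have key := weighted_geom M z
  rw [hz, e2] at key
  have h3 : (z - 1) * ((∑ m ∈ Finset.range M, (m:ℂ) * z^m) * (z - 1))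
      = (z - 1) * ((M:ℂ) * 1) := by linear_combination key
  have h4 := mul_left_cancel₀ hz1 h3
  have h5 : (∑ m ∈ Finset.range M, (m:ℂ) * z^m) = Complex.ofReal ((M:ℝ)) * (1 / (z - 1)) := by
    rw [← mul_div_assoc, eq_div_iff hz1]
    push_cast
    linear_combination h4
  rw [sum_m_cos_eq_re, ← hzdef, h5, Complex.re_ofReal_mul,
    re_one_div_sub_one z (normSq_exp_I θ) h1]
  ring

lemma exp_ne_one_of_not_period (θ : ℝ) (hper : ¬ ∃ n : ℤ, θ = 2 * π * (n:ℝ)) :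
    Complex.exp (θ * Complex.I) ≠ 1 := by
  intro hone
  rcases Complex.exp_eq_one_iff.mp hone with ⟨n, hn⟩
  apply hper
  refine ⟨n, ?_⟩
  have h2 := congrArg Complex.im hn
  simp at h2
  linarith

/-- The noiseless drift of the recursive beam tracker. -/
noncomputable def driftF (M : ℕ) (d lam v x : ℝ) : ℝ :=
  -(1 / Real.sqrt M) * ∑ m ∈ Finset.range M, Real.sin ((2 * π * d / lam) * m * (v - x))

lemma driftF_hasDerivAt (M : ℕ) (d lam x v : ℝ) :
    HasDerivAt (fun u => driftF M d lam u x)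
      (-(1 / Real.sqrt M) * ((2 * π * d / lam) *
        ∑ m ∈ Finset.range M, (m:ℝ) * Real.cos ((m:ℝ) * ((2 * π * d / lam) * (v - x))))) v := by
  unfold driftF
  have h : HasDerivAt (fun u : ℝ => ∑ m ∈ Finset.range M,
        Real.sin ((2 * π * d / lam) * m * (u - x)))
      (∑ m ∈ Finset.range M,
        ((2 * π * d / lam) * m) * Real.cos ((2 * π * d / lam) * m * (v - x))) v := by
    apply HasDerivAt.fun_sum
    intro m _
    have h1 : HasDerivAt (fun u : ℝ => (2 * π * d / lam) * m * (u - x))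
        ((2 * π * d / lam) * m) v := by
      simpa using ((hasDerivAt_id v).sub_const x).const_mul ((2 * π * d / lam) * (m:ℝ))
    have h2 := (Real.hasDerivAt_sin ((2 * π * d / lam) * m * (v - x))).comp v h1
    refine HasDerivAt.congr_deriv h2 ?_
    ring
  have h3 := h.const_mul (-(1 / Real.sqrt M))
  refine HasDerivAt.congr_deriv h3 ?_
  rw [Finset.mul_sum, Finset.mul_sum, Finset.mul_sum]
  congr 1
  funext m
  rw [show (m:ℝ) * ((2 * π * d / lam) * (v - x)) = (2 * π * d / lam) * m * (v - x) by ring]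
  ring

/-- the set of stable points of the ODE drift `f(·,x)` on `(−1,1]`
equals `{x + kλ/((M−1)d) : k ∈ ℤ} ∩ (−1,1]`. -/
theorem stmt_3 (M : ℕ) (hM : 2 ≤ M) (d lam : ℝ) (hd : 0 < d) (hdl : d ≤ lam / 2)
    (x : ℝ) (hx : x ∈ Set.Ioo (-1 : ℝ) 1) :
    {v : ℝ | v ∈ Set.Ioc (-1 : ℝ) 1 ∧ driftF M d lam v x = 0 ∧
        deriv (fun u => driftF M d lam u x) v < 0}
      = {v : ℝ | v ∈ Set.Ioc (-1 : ℝ) 1 ∧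
          ∃ k : ℤ, v = x + (k : ℝ) * lam / (((M : ℝ) - 1) * d)} := by
  have hlam : 0 < lam := by linarith
  have hpi := Real.pi_pos
  have hc : 0 < 2 * π * d / lam := by positivity
  set c : ℝ := 2 * π * d / lam with hcdef
  have hMR : (2:ℝ) ≤ (M:ℝ) := by exact_mod_cast hM
  have hM1 : ((M:ℝ) - 1) ≠ 0 := by linarith
  have hsqrt : (0:ℝ) < Real.sqrt M := Real.sqrt_pos.mpr (by positivity)
  -- rewrite driftF value
  have hval : ∀ v : ℝ, driftF M d lam v x =
      -(1 / Real.sqrt M) * ∑ m ∈ Finset.range M, Real.sin ((m:ℝ) * (c * (v - x))) := by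
    intro v
    unfold driftF
    congr 1
    apply Finset.sum_congr rfl
    intro m _
    congr 1
    ring
  have hvz : ∀ v : ℝ, (driftF M d lam v x = 0 ↔
      (∑ m ∈ Finset.range M, Real.sin ((m:ℝ) * (c * (v - x)))) = 0) := by
    intro v
    rw [hval v]
    constructor
    · intro h
      have := mul_eq_zero.mp h
      rcases this with h | h
      · exfalso
        have : (1 : ℝ) / Real.sqrt M ≠ 0 := by positivity
        simp at h
        exact this (by simpa using h)
      · exact h
    · intro h; rw [h, mul_zero]
  have hderiv : ∀ v : ℝ, deriv (fun u => driftF M d lam u x) v =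
      -(1 / Real.sqrt M) * (c * ∑ m ∈ Finset.range M,
        (m:ℝ) * Real.cos ((m:ℝ) * (c * (v - x)))) := (fun v => (driftF_hasDerivAt M d lam x v).deriv)
  have hdneg : ∀ v : ℝ, (deriv (fun u => driftF M d lam u x) v < 0 ↔
      0 < ∑ m ∈ Finset.range M, (m:ℝ) * Real.cos ((m:ℝ) * (c * (v - x)))) := by
    intro v
    rw [hderiv v]
    constructor
    · intro h
      by_contra hle
      push_neg at hle
      have h1 : c * (∑ m ∈ Finset.range M, (m:ℝ) * Real.cos ((m:ℝ) * (c * (v - x)))) ≤ 0 :=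
        mul_nonpos_of_nonneg_of_nonpos hc.le hle
      nlinarith [mul_nonneg (le_of_lt (show (0:ℝ) < 1 / Real.sqrt M by positivity))
        (neg_nonneg.mpr h1)]
    · intro h
      have h2 : 0 < (1 / Real.sqrt M) *
          (c * ∑ m ∈ Finset.range M, (m:ℝ) * Real.cos ((m:ℝ) * (c * (v - x)))) :=
        mul_pos (by positivity) (mul_pos hc h)
      nlinarith [h2]
  -- parametrization equivalence
  have hpar : ∀ v : ℝ, ((∃ k : ℤ, v = x + (k:ℝ) * lam / (((M:ℝ) - 1) * d)) ↔
      (∃ k : ℤ, c * (v - x) = 2 * π * (k:ℝ) / ((M:ℝ) - 1))) := by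
    intro v
    constructor
    · rintro ⟨k, hk⟩
      refine ⟨k, ?_⟩
      rw [hk, hcdef]
      field_simp
      ring
    · rintro ⟨k, hk⟩
      refine ⟨k, ?_⟩
      rw [hcdef] at hk
      field_simp at hk ⊢
      nlinarith [hk]
  ext v
  simp only [Set.mem_setOf_eq]
  constructor
  · rintro ⟨hIoc, hf, hf'⟩
    refine ⟨hIoc, ?_⟩
    rw [hpar v]
    set θ := c * (v - x) with hθdef
    have hS : (∑ m ∈ Finset.range M, Real.sin ((m:ℝ) * θ)) = 0 := (hvz v).mp hf
    have hC : 0 < ∑ m ∈ Finset.range M, (m:ℝ) * Real.cos ((m:ℝ) * θ) := (hdneg v).mp hf'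
    rcases (sum_sin_eq_zero_iff M θ).mp hS with h | h
    · rcases Real.sin_eq_zero_iff.mp h with ⟨j, hj⟩
      have hMθ : (M:ℝ) * θ = 2 * π * (j:ℝ) := by linarith
      by_cases hper : ∃ n : ℤ, θ = 2 * π * (n:ℝ)
      · rcases hper with ⟨n, hn⟩
        refine ⟨n * ((M:ℤ) - 1), ?_⟩
        rw [hn]
        push_cast
        field_simp
      · exfalso
        have h1 := exp_ne_one_of_not_period θ hper
        have hzM : Complex.exp (θ * Complex.I) ^ M = 1 := by
          rw [← Complex.exp_nat_mul]
          have h2 : (((M:ℝ) * θ : ℝ) : ℂ) = ((2 * π * (j:ℝ) : ℝ) : ℂ) :=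
            congrArg Complex.ofReal hMθ
          push_cast at h2
          have hcast : (M:ℂ) * ((θ:ℂ) * Complex.I) = (j:ℂ) * (2 * (π:ℂ) * Complex.I) := by
            linear_combination Complex.I * h2
          rw [hcast]
          exact Complex.exp_int_mul_two_pi_mul_I j
        rw [sum_m_cos_unstable M θ hzM h1] at hC
        nlinarith
    · rcases Real.sin_eq_zero_iff.mp h with ⟨k, hk⟩
      refine ⟨k, ?_⟩
      rw [eq_div_iff hM1]
      linear_combination (-2 : ℝ) * hk
  · rintro ⟨hIoc, hex⟩
    rw [hpar v] at hex
    rcases hex with ⟨k, hk⟩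
    set θ := c * (v - x) with hθdef
    have hsinM1 : Real.sin (((M:ℝ) - 1) * θ / 2) = 0 := by
      rw [hk, show ((M:ℝ) - 1) * (2 * π * (k:ℝ) / ((M:ℝ) - 1)) / 2 = (k:ℝ) * π from by
        field_simp; try ring]
      exact Real.sin_int_mul_pi k
    refine ⟨hIoc, (hvz v).mpr ((sum_sin_eq_zero_iff M θ).mpr (Or.inr hsinM1)), ?_⟩
    rw [hdneg v]
    by_cases hper : ∃ n : ℤ, θ = 2 * π * (n:ℝ)
    · rcases hper with ⟨n, hn⟩
      have hval2 : ∑ m ∈ Finset.range M, (m:ℝ) * Real.cos ((m:ℝ) * θ)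
          = (M:ℝ) * ((M:ℝ) - 1) / 2 := by
        rw [hn, show (2 * π * (n:ℝ)) = 2 * (n:ℝ) * π from by ring]
        exact sum_m_cos_center M n
      rw [hval2]
      nlinarith
    · have h1 := exp_ne_one_of_not_period θ hper
      have hzM : Complex.exp (θ * Complex.I) ^ (M - 1) = 1 := by
        rw [← Complex.exp_nat_mul]
        have hMθ : ((M:ℝ) - 1) * θ = 2 * π * (k:ℝ) := by
          rw [hk]
          field_simp
          try ring
        have h2 : ((((M:ℝ) - 1) * θ : ℝ) : ℂ) = ((2 * π * (k:ℝ) : ℝ) : ℂ) :=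
          congrArg Complex.ofReal hMθ
        push_cast at h2
        have hcast : ((M - 1 : ℕ):ℂ) * ((θ:ℂ) * Complex.I) = (k:ℂ) * (2 * (π:ℂ) * Complex.I) := by
          push_cast [Nat.cast_sub (show 1 ≤ M by omega)]
          linear_combination Complex.I * h2
        rw [hcast]
        exact Complex.exp_int_mul_two_pi_mul_I k
      rw [sum_m_cos_sidelobe M hM θ hzM h1]
      linarith
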